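/- Let K be a characteristic vector for M, E ⊆ V, and let v₁, v₂ ∈ E be distinct. Then a_{v₁}(K,E) + b_{v₂}(K, E∖{v₁}) = b_{v₂}(K,E) + a_{v₁}(K + 2v₂*, E∖{v₂}). -/

import Mathlib

open Finset

variable {V : Type*}

/-- `M` is negative definite: `xᵀMx < 0` for every nonzero `x ∈ ℝ^V`. -/
def NegDef [Fintype V] (M : V → V → ℤ) : Prop :=
  ∀ x : V → ℝ, x ≠ 0 → (∑ v, ∑ w, (M v w : ℝ) * x v * x w) < 0

/-- `K` is a characteristic vector for `M`: `K(v) ≡ v·v (mod 2)` for all `v`. -/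
def IsChar (M : V → V → ℤ) (K : V → ℤ) : Prop :=
  ∀ v, Int.ModEq 2 (K v) (M v v)

/-- `f(K, I) = (1/2)(Σ_{v∈I} K(v) + (Σ_{v∈I} v)·(Σ_{v∈I} v))` (an exact integer division
for characteristic `K`). -/
def latF (M : V → V → ℤ) (K : V → ℤ) (I : Finset V) : ℤ :=
  ((∑ v ∈ I, K v) + ∑ v ∈ I, ∑ w ∈ I, M v w) / 2

/-- `g(K, E) = min_{I ⊆ E} f(K, I)`. -/
def latG (M : V → V → ℤ) (K : V → ℤ) (E : Finset V) : ℤ :=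
  (E.powerset.image (latF M K)).min'
    ⟨_, Finset.mem_image_of_mem _ (Finset.empty_mem_powerset E)⟩

/-- `B_v(K, E) = min { f(K, I) : v ∈ I ⊆ E }` (for `v ∈ E`). -/
def latB [DecidableEq V] (M : V → V → ℤ) (K : V → ℤ) (E : Finset V) (v : V) : ℤ :=
  ((E.erase v).powerset.image (fun I => latF M K (insert v I))).min'
    ⟨_, Finset.mem_image_of_mem _ (Finset.empty_mem_powerset _)⟩

/-- `a_v(K,E) = A_v(K,E) - g(K,E) = g(K, E∖{v}) - g(K,E)`. -/
def lata [DecidableEq V] (M : V → V → ℤ) (K : V → ℤ) (E : Finset V) (v : V) : ℤ :=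
  latG M K (E.erase v) - latG M K E

/-- `b_v(K,E) = B_v(K,E) - g(K,E)`. -/
def latb [DecidableEq V] (M : V → V → ℤ) (K : V → ℤ) (E : Finset V) (v : V) : ℤ :=
  latB M K E v - latG M K E


lemma min'_shift {ι : Type*} (P : Finset ι) (hP : P.Nonempty) (f g : ι → ℤ) (e : ℤ)
    (h : ∀ I ∈ P, f I = g I + e) :
    (P.image f).min' (hP.image f) = (P.image g).min' (hP.image g) + e := by
  apply le_antisymm
  · obtain ⟨I, hI, hIe⟩ := Finset.mem_image.mp (Finset.min'_mem _ (hP.image g))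
    calc (P.image f).min' (hP.image f) ≤ f I := Finset.min'_le _ _ (Finset.mem_image_of_mem f hI)
    _ = g I + e := h I hI
    _ = _ := by rw [hIe]
  · obtain ⟨I, hI, hIe⟩ := Finset.mem_image.mp (Finset.min'_mem _ (hP.image f))
    rw [← hIe, h I hI]
    exact (add_le_add_iff_right e).mpr (Finset.min'_le _ _ (Finset.mem_image_of_mem g hI))

lemma latF_insert (M : V → V → ℤ) (hsym : ∀ v w, M v w = M w v) (K : V → ℤ) (v₂ : V)
    (hd : 2 ∣ (K v₂ + M v₂ v₂)) (I : Finset V) [DecidableEq V] (hI : v₂ ∉ I) :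
    latF M K (insert v₂ I) = latF M (fun w => K w + 2 * M v₂ w) I + (K v₂ + M v₂ v₂) / 2 := by
  unfold latF
  rw [← Int.add_ediv_of_dvd_right hd]
  congr 1
  have hswap : ∑ v ∈ I, M v v₂ = ∑ w ∈ I, M v₂ w := Finset.sum_congr rfl (fun v _ => hsym v v₂)
  simp only [Finset.sum_insert hI, Finset.sum_add_distrib, hswap, ← Finset.sum_mul,
    ← Finset.mul_sum]
  ring

lemma latB_eq [DecidableEq V] (M : V → V → ℤ) (hsym : ∀ v w, M v w = M w v) (K : V → ℤ)
    (hK : IsChar M K) (E : Finset V) (v₂ : V) :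
    latB M K E v₂ = latG M (fun w => K w + 2 * M v₂ w) (E.erase v₂) + (K v₂ + M v₂ v₂) / 2 := by
  have hd : 2 ∣ (K v₂ + M v₂ v₂) := by
    have h := (hK v₂).dvd
    omega
  have hP : (E.erase v₂).powerset.Nonempty := ⟨∅, Finset.empty_mem_powerset _⟩
  have := min'_shift (E.erase v₂).powerset hP (fun I => latF M K (insert v₂ I))
    (latF M (fun w => K w + 2 * M v₂ w)) ((K v₂ + M v₂ v₂) / 2)
    (fun I hI => latF_insert M hsym K v₂ hd I
      (fun hc => Finset.notMem_erase v₂ E ((Finset.mem_powerset.mp hI) hc)))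
  exact this

/-- `a_{v₁}(K,E) + b_{v₂}(K, E∖{v₁}) = b_{v₂}(K,E) + a_{v₁}(K + 2v₂*, E∖{v₂})`. -/
theorem stmt3 [Fintype V] [DecidableEq V] (M : V → V → ℤ)
    (hsym : ∀ v w, M v w = M w v)
    (hoff : ∀ v w, v ≠ w → M v w = 0 ∨ M v w = 1)
    (hneg : NegDef M)
    (K : V → ℤ) (hK : IsChar M K) (E : Finset V) (v₁ v₂ : V)
    (h1 : v₁ ∈ E) (h2 : v₂ ∈ E) (hne : v₁ ≠ v₂) :
    lata M K E v₁ + latb M K (E.erase v₁) v₂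
      = latb M K E v₂ + lata M (fun w => K w + 2 * M v₂ w) (E.erase v₂) v₁ := by
  have hB1 := latB_eq M hsym K hK E v₂
  have hB2 := latB_eq M hsym K hK (E.erase v₁) v₂
  have hcomm : (E.erase v₁).erase v₂ = (E.erase v₂).erase v₁ := by
    ext x; simp [Finset.mem_erase]; tauto
  rw [hcomm] at hB2
  unfold lata latb
  rw [hB1, hB2]
  ring
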